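/- arXiv:1001.1808 — 2 statements merged into one kernel-verified Lean document; each statement's English description precedes it below -/
import Mathlib

section
/- Fix a soft membership assignment m with 0 < α_i(m) < 1 and σ_i²(m) > 0 for i = 1,2, and fix an index n ∈ {1,…,N}. For t in a neighborhood of m_{n,1}, let m(t) denote the assignment equal to m except that its (n,1) entry is replaced by t (and its (n,2) entry by 1 − t), and let g(t) = ln G(m(t)). Then g is differentiable at t = m_{n,1}, and g′(m_{n,1}) = (1/N)[ln(σ₁²) − 2 ln(α₁) + (x_n − μ₁)²/σ₁²] − (1/N)[ln(σ₂²) − 2 ln(α₂) + (x_n − μ₂)²/σ₂²] = (2/N) ln(√(2π) α₂ f_{μ₂,σ₂}(x_n)) − (2/N) ln(√(2π) α₁ f_{μ₁,σ₁}(x_n)), where α_i, μ_i, σ_i are the parameters induced by m. -/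
open Real Finset MeasureTheory

noncomputable section

/-- Gaussian density with mean `μ` and standard deviation `σ`. -/
def gaussDen (μ σ x : ℝ) : ℝ :=
  (1 / (Real.sqrt (2 * Real.pi) * σ)) * Real.exp (-(x - μ) ^ 2 / (2 * σ ^ 2))

/-- Binary entropy-type function `H(a, b) = -a ln a - b ln b` (nats). -/
def H2 (a b : ℝ) : ℝ := -a * Real.log a - b * Real.log b

/-- A soft membership assignment: each `m n ∈ [0,1]`. -/
def isMemb {N : ℕ} (m : Fin N → ℝ) : Prop := ∀ n, 0 ≤ m n ∧ m n ≤ 1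

/-- Induced mixing weight `α` for the class with weights `w`. -/
def alph {N : ℕ} (w : Fin N → ℝ) : ℝ := (∑ n, w n) / N

/-- Induced mean `μ` for the class with weights `w`. -/
def muI {N : ℕ} (x w : Fin N → ℝ) : ℝ := (∑ n, w n * x n) / (alph w * N)

/-- Induced variance `σ²` for the class with weights `w`. -/
def sig2 {N : ℕ} (x w : Fin N → ℝ) : ℝ :=
  (∑ n, w n * (x n - muI x w) ^ 2) / (alph w * N)

/-- The objective `G(m) = exp(2 H(α₁,α₂)) (σ₁²)^{α₁} (σ₂²)^{α₂}`. -/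
def objG {N : ℕ} (x m : Fin N → ℝ) : ℝ :=
  Real.exp (2 * H2 (alph m) (alph fun n => 1 - m n)) *
    (sig2 x m) ^ (alph m) * (sig2 x fun n => 1 - m n) ^ (alph fun n => 1 - m n)

lemma sum_update_mul {N : ℕ} (m : Fin N → ℝ) (n : Fin N) (t : ℝ) (f : Fin N → ℝ) :
    ∑ k, Function.update m n t k * f k = (∑ k, m k * f k) + (t - m n) * f n := by
  have h : ∑ k ∈ univ.erase n, Function.update m n t k * f k
      = ∑ k ∈ univ.erase n, m k * f k :=
    Finset.sum_congr rfl fun k hk => by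
      rw [Function.update_of_ne (Finset.ne_of_mem_erase hk)]
  rw [← Finset.sum_erase_add univ _ (mem_univ n),
      ← Finset.sum_erase_add univ (fun k => m k * f k) (mem_univ n), h,
      Function.update_self]
  ring

lemma sig2_eq {N : ℕ} (x w : Fin N → ℝ) (hN : (N:ℝ) ≠ 0) (hw : (∑ k, w k) ≠ 0) :
    sig2 x w = (∑ k, w k * x k ^ 2) / (∑ k, w k) - ((∑ k, w k * x k) / (∑ k, w k)) ^ 2 := by
  have halphN : alph w * N = ∑ k, w k := by unfold alph; field_simp
  have hμ : muI x w = (∑ k, w k * x k) / (∑ k, w k) := by unfold muI; rw [halphN]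
  have hexp : ∑ k, w k * (x k - muI x w) ^ 2
      = (∑ k, w k * x k ^ 2) - 2 * muI x w * (∑ k, w k * x k) + muI x w ^ 2 * (∑ k, w k) := by
    have h : ∀ k : Fin N, w k * (x k - muI x w) ^ 2
        = w k * x k ^ 2 - 2 * muI x w * (w k * x k) + muI x w ^ 2 * w k := fun k => by ring
    simp_rw [h]
    rw [Finset.sum_add_distrib, Finset.sum_sub_distrib, ← Finset.mul_sum, ← Finset.mul_sum]
  unfold sig2
  rw [halphN, hexp, hμ]
  field_simp
  ring

lemma logGauss (Nr a v μ X : ℝ) (ha : 0 < a) (hv : 0 < v) :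
    (2 / Nr) * Real.log (Real.sqrt (2 * Real.pi) * (a * gaussDen μ (Real.sqrt v) X))
      = -((1 / Nr) * (Real.log v - 2 * Real.log a + (X - μ) ^ 2 / v)) := by
  have h2π : (0:ℝ) < Real.sqrt (2 * Real.pi) := Real.sqrt_pos.2 (by positivity)
  have hsv : (0:ℝ) < Real.sqrt v := Real.sqrt_pos.2 hv
  have h1 : Real.sqrt (2 * Real.pi) * (a * gaussDen μ (Real.sqrt v) X)
      = (a / Real.sqrt v) * Real.exp (-(X - μ) ^ 2 / (2 * v)) := by
    unfold gaussDen
    rw [Real.sq_sqrt hv.le]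
    field_simp
  rw [h1, Real.log_mul (by positivity) (Real.exp_ne_zero _),
    Real.log_div (ne_of_gt ha) (ne_of_gt hsv), Real.log_exp, Real.log_sqrt hv.le]
  field_simp
  ring

lemma oneClass (Nr xn d a0 b0 c0 t₀ : ℝ) (hN : 0 < Nr)
    (hA : 0 < a0) (hV : 0 < c0 / a0 - (b0 / a0) ^ 2) :
    HasDerivAt (fun t =>
      -2 * ((a0 + d * (t - t₀)) / Nr) * Real.log ((a0 + d * (t - t₀)) / Nr)
      + ((a0 + d * (t - t₀)) / Nr) *
        Real.log ((c0 + d * (t - t₀) * xn ^ 2) / (a0 + d * (t - t₀))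
          - ((b0 + d * (t - t₀) * xn) / (a0 + d * (t - t₀))) ^ 2))
      (d * ((1 / Nr) * (Real.log (c0 / a0 - (b0 / a0) ^ 2) - 2 * Real.log (a0 / Nr)
        + (xn - b0 / a0) ^ 2 / (c0 / a0 - (b0 / a0) ^ 2)) - 3 / Nr)) t₀ := by
  have hNe : Nr ≠ 0 := ne_of_gt hN
  have hAe : a0 ≠ 0 := ne_of_gt hA
  have hA' : HasDerivAt (fun t => a0 + d * (t - t₀)) d t₀ := by
    simpa using (((hasDerivAt_id t₀).sub_const t₀).const_mul d).const_add a0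
  have hB' : HasDerivAt (fun t => b0 + d * (t - t₀) * xn) (d * xn) t₀ := by
    simpa using ((((hasDerivAt_id t₀).sub_const t₀).const_mul d).mul_const xn).const_add b0
  have hC' : HasDerivAt (fun t => c0 + d * (t - t₀) * xn ^ 2) (d * xn ^ 2) t₀ := by
    simpa using ((((hasDerivAt_id t₀).sub_const t₀).const_mul d).mul_const (xn ^ 2)).const_add c0
  have hAt0 : a0 + d * (t₀ - t₀) = a0 := by ring
  have hAne : a0 + d * (t₀ - t₀) ≠ 0 := by rw [hAt0]; exact hAe
  have hq1 := hC'.div hA' hAne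
  have hq2 := hB'.div hA' hAne
  have hv := hq1.sub (hq2.pow 2)
  have hvne : (c0 + d * (t₀ - t₀) * xn ^ 2) / (a0 + d * (t₀ - t₀))
      - ((b0 + d * (t₀ - t₀) * xn) / (a0 + d * (t₀ - t₀))) ^ 2 ≠ 0 := by
    simpa using ne_of_gt hV
  have hlogv := hv.log hvne
  have hAN := hA'.div_const Nr
  have hANne : (a0 + d * (t₀ - t₀)) / Nr ≠ 0 := by simpa [hAt0] using div_ne_zero hAe hNe
  have hlogAN := hAN.log hANne
  have h1 := (hAN.const_mul (-2 : ℝ)).mul hlogAN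
  have h2 := hAN.mul hlogv
  have := h1.add h2
  convert this using 1
  case e'_4 => rfl
  case e'_5 => rfl
  case e'_8 => rfl
  simp only [Pi.div_apply, Pi.sub_apply, Pi.pow_apply]
  have hs : t₀ - t₀ = (0:ℝ) := sub_self t₀
  rw [hs]
  simp only [mul_zero, zero_mul, add_zero, pow_one]
  have hVne : c0 / a0 - (b0 / a0) ^ 2 ≠ 0 := ne_of_gt hV
  have hVeq : c0 / a0 - (b0 / a0) ^ 2 = (c0 * a0 - b0 ^ 2) / a0 ^ 2 := by
    field_simp
  have ha2 : 0 < a0 ^ 2 := by positivity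
  have h5 : c0 * a0 - b0 ^ 2 ≠ 0 := by
    have h := hVeq ▸ hV
    rcases div_pos_iff.mp h with ⟨h1, _⟩ | ⟨_, h2⟩
    · exact ne_of_gt h1
    · linarith
  rw [hVeq]
  generalize Real.log ((c0 * a0 - b0 ^ 2) / a0 ^ 2) = L2
  generalize Real.log (a0 / Nr) = L1
  have h5' : a0 * c0 - b0 ^ 2 ≠ 0 := by rwa [mul_comm]
  push_cast
  field_simp
  ring

/-- **Derivative of `ln G` along one soft membership coordinate.**
With `m(t)` the assignment `m` whose `(n,1)` entry is replaced by `t` (and `(n,2)` entry by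
`1 - t`), the function `g(t) = ln G(m(t))` is differentiable at `t = m_{n,1}` with
derivative `(1/N)[ln σ₁² - 2 ln α₁ + (xₙ-μ₁)²/σ₁²] - (1/N)[ln σ₂² - 2 ln α₂ + (xₙ-μ₂)²/σ₂²]`,
which also equals `(2/N) ln(√(2π) α₂ f₂(xₙ)) - (2/N) ln(√(2π) α₁ f₁(xₙ))`. -/
theorem deriv_ln_objG
    (N : ℕ) (hN : 1 ≤ N) (x : Fin N → ℝ) (m : Fin N → ℝ)
    (hmemb : isMemb m)
    (hα1 : 0 < alph m) (hα1' : alph m < 1)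
    (hα2 : 0 < alph fun n => 1 - m n) (hα2' : (alph fun n => 1 - m n) < 1)
    (hσ1 : 0 < sig2 x m) (hσ2 : 0 < sig2 x fun n => 1 - m n)
    (n : Fin N) :
    HasDerivAt (fun t : ℝ => Real.log (objG x (Function.update m n t)))
      ((1 / N) * (Real.log (sig2 x m) - 2 * Real.log (alph m)
          + (x n - muI x m) ^ 2 / sig2 x m)
        - (1 / N) * (Real.log (sig2 x fun k => 1 - m k)
          - 2 * Real.log (alph fun k => 1 - m k)
          + (x n - muI x fun k => 1 - m k) ^ 2 / sig2 x fun k => 1 - m k))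
      (m n)
    ∧
    (1 / N) * (Real.log (sig2 x m) - 2 * Real.log (alph m)
        + (x n - muI x m) ^ 2 / sig2 x m)
      - (1 / N) * (Real.log (sig2 x fun k => 1 - m k)
        - 2 * Real.log (alph fun k => 1 - m k)
        + (x n - muI x fun k => 1 - m k) ^ 2 / sig2 x fun k => 1 - m k)
    = (2 / N) * Real.log (Real.sqrt (2 * Real.pi) * ((alph fun k => 1 - m k) *
          gaussDen (muI x fun k => 1 - m k) (Real.sqrt (sig2 x fun k => 1 - m k)) (x n)))
      - (2 / N) * Real.log (Real.sqrt (2 * Real.pi) * (alph m *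
          gaussDen (muI x m) (Real.sqrt (sig2 x m)) (x n))) := by
  have hNe : (N:ℝ) ≠ 0 := Nat.cast_ne_zero.2 (by omega)
  have hNr : (0:ℝ) < N := by exact_mod_cast Nat.pos_of_ne_zero (by omega)
  have halph1 : alph m = (∑ k, m k) / (N:ℝ) := rfl
  have hs2 : ∑ k, (1 - m k) = (N:ℝ) - ∑ k, m k := by
    rw [Finset.sum_sub_distrib]; simp
  have halph2 : (alph fun k => 1 - m k) = ((N:ℝ) - ∑ k, m k) / (N:ℝ) := by
    unfold alph; rw [hs2]
  have hsa : 0 < ∑ k, m k := by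
    rcases div_pos_iff.mp (halph1 ▸ hα1) with ⟨h, _⟩ | ⟨_, h⟩
    · exact h
    · linarith
  have hA20 : 0 < (N:ℝ) - ∑ k, m k := by
    rcases div_pos_iff.mp (halph2 ▸ hα2) with ⟨h, _⟩ | ⟨_, h⟩
    · exact h
    · linarith
  have hs2b : ∑ k, (1 - m k) * x k = (∑ k, x k) - ∑ k, m k * x k := by
    simp_rw [sub_mul, one_mul]; rw [Finset.sum_sub_distrib]
  have hs2c : ∑ k, (1 - m k) * x k ^ 2 = (∑ k, x k ^ 2) - ∑ k, m k * x k ^ 2 := by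
    simp_rw [sub_mul, one_mul]; rw [Finset.sum_sub_distrib]
  have hmu1 : muI x m = (∑ k, m k * x k) / ∑ k, m k := by
    unfold muI alph; rw [div_mul_cancel₀ _ hNe]
  have hmu2 : (muI x fun k => 1 - m k)
      = ((∑ k, x k) - ∑ k, m k * x k) / ((N:ℝ) - ∑ k, m k) := by
    unfold muI alph; rw [div_mul_cancel₀ _ hNe, hs2, hs2b]
  have hsig1 : sig2 x m
      = (∑ k, m k * x k ^ 2) / (∑ k, m k) - ((∑ k, m k * x k) / ∑ k, m k) ^ 2 :=
    sig2_eq x m hNe (ne_of_gt hsa)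
  have hsig2' : (sig2 x fun k => 1 - m k)
      = ((∑ k, x k ^ 2) - ∑ k, m k * x k ^ 2) / ((N:ℝ) - ∑ k, m k)
        - (((∑ k, x k) - ∑ k, m k * x k) / ((N:ℝ) - ∑ k, m k)) ^ 2 := by
    rw [sig2_eq x _ hNe (by rw [hs2]; exact ne_of_gt hA20), hs2, hs2b, hs2c]
  have hv1 : 0 < (∑ k, m k * x k ^ 2) / (∑ k, m k) - ((∑ k, m k * x k) / ∑ k, m k) ^ 2 := by
    rw [← hsig1]; exact hσ1
  have hv2 : 0 < ((∑ k, x k ^ 2) - ∑ k, m k * x k ^ 2) / ((N:ℝ) - ∑ k, m k)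
      - (((∑ k, x k) - ∑ k, m k * x k) / ((N:ℝ) - ∑ k, m k)) ^ 2 := by
    rw [← hsig2']; exact hσ2
  constructor
  · have hd1 := oneClass (N:ℝ) (x n) 1 (∑ k, m k) (∑ k, m k * x k) (∑ k, m k * x k ^ 2)
      (m n) hNr hsa hv1
    have hd2 := oneClass (N:ℝ) (x n) (-1) ((N:ℝ) - ∑ k, m k) ((∑ k, x k) - ∑ k, m k * x k)
      ((∑ k, x k ^ 2) - ∑ k, m k * x k ^ 2) (m n) hNr hA20 hv2
    have hφ := hd1.add hd2
    -- eventual positivity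
    have hcA : ContinuousAt (fun t : ℝ => (∑ k, m k) + (t - m n)) (m n) := by fun_prop
    have hAne0 : (∑ k, m k) + (m n - m n) ≠ 0 := by simpa using hsa.ne'
    have hcA2 : ContinuousAt (fun t : ℝ => (N:ℝ) - (∑ k, m k) - (t - m n)) (m n) := by fun_prop
    have hA2ne0 : (N:ℝ) - (∑ k, m k) - (m n - m n) ≠ 0 := by simpa using hA20.ne'
    have ev1 : ∀ᶠ t in nhds (m n), 0 < (∑ k, m k) + (t - m n) :=
      hcA.eventually (eventually_gt_nhds (by simpa using hsa))
    have ev2 : ∀ᶠ t in nhds (m n), 0 < (N:ℝ) - (∑ k, m k) - (t - m n) :=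
      hcA2.eventually (eventually_gt_nhds (by simpa using hA20))
    have hcV1 : ContinuousAt (fun t : ℝ =>
        ((∑ k, m k * x k ^ 2) + (t - m n) * x n ^ 2) / ((∑ k, m k) + (t - m n))
        - (((∑ k, m k * x k) + (t - m n) * x n) / ((∑ k, m k) + (t - m n))) ^ 2) (m n) :=
      (ContinuousAt.div (by fun_prop) hcA hAne0).sub
        ((ContinuousAt.div (by fun_prop) hcA hAne0).pow 2)
    have hcV2 : ContinuousAt (fun t : ℝ =>
        (((∑ k, x k ^ 2) - ∑ k, m k * x k ^ 2) - (t - m n) * x n ^ 2)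
          / ((N:ℝ) - (∑ k, m k) - (t - m n))
        - ((((∑ k, x k) - ∑ k, m k * x k) - (t - m n) * x n)
          / ((N:ℝ) - (∑ k, m k) - (t - m n))) ^ 2) (m n) :=
      (ContinuousAt.div (by fun_prop) hcA2 hA2ne0).sub
        ((ContinuousAt.div (by fun_prop) hcA2 hA2ne0).pow 2)
    have ev3 : ∀ᶠ t in nhds (m n), 0 <
        ((∑ k, m k * x k ^ 2) + (t - m n) * x n ^ 2) / ((∑ k, m k) + (t - m n))
        - (((∑ k, m k * x k) + (t - m n) * x n) / ((∑ k, m k) + (t - m n))) ^ 2 :=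
      hcV1.eventually (eventually_gt_nhds (by simpa using hv1))
    have ev4 : ∀ᶠ t in nhds (m n), 0 <
        (((∑ k, x k ^ 2) - ∑ k, m k * x k ^ 2) - (t - m n) * x n ^ 2)
          / ((N:ℝ) - (∑ k, m k) - (t - m n))
        - ((((∑ k, x k) - ∑ k, m k * x k) - (t - m n) * x n)
          / ((N:ℝ) - (∑ k, m k) - (t - m n))) ^ 2 :=
      hcV2.eventually (eventually_gt_nhds (by simpa using hv2))
    have heq : (fun t : ℝ => Real.log (objG x (Function.update m n t))) =ᶠ[nhds (m n)]
        (fun t : ℝ =>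
          (-2 * (((∑ k, m k) + 1 * (t - m n)) / (N:ℝ))
              * Real.log (((∑ k, m k) + 1 * (t - m n)) / (N:ℝ))
            + (((∑ k, m k) + 1 * (t - m n)) / (N:ℝ)) *
              Real.log (((∑ k, m k * x k ^ 2) + 1 * (t - m n) * x n ^ 2)
                  / ((∑ k, m k) + 1 * (t - m n))
                - (((∑ k, m k * x k) + 1 * (t - m n) * x n)
                  / ((∑ k, m k) + 1 * (t - m n))) ^ 2))
          + (-2 * ((((N:ℝ) - ∑ k, m k) + -1 * (t - m n)) / (N:ℝ))
              * Real.log ((((N:ℝ) - ∑ k, m k) + -1 * (t - m n)) / (N:ℝ))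
            + ((((N:ℝ) - ∑ k, m k) + -1 * (t - m n)) / (N:ℝ)) *
              Real.log ((((∑ k, x k ^ 2) - ∑ k, m k * x k ^ 2) + -1 * (t - m n) * x n ^ 2)
                  / (((N:ℝ) - ∑ k, m k) + -1 * (t - m n))
                - ((((∑ k, x k) - ∑ k, m k * x k) + -1 * (t - m n) * x n)
                  / (((N:ℝ) - ∑ k, m k) + -1 * (t - m n))) ^ 2))) := by
      filter_upwards [ev1, ev2, ev3, ev4] with t h1 h2 h3 h4
      have hsu : ∑ k, Function.update m n t k = (∑ k, m k) + (t - m n) := by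
        simpa using sum_update_mul m n t (fun _ => 1)
      have hsu2 : ∑ k, (1 - Function.update m n t k) = (N:ℝ) - (∑ k, m k) - (t - m n) := by
        rw [Finset.sum_sub_distrib, hsu]
        simp
        ring
      have hbx : ∑ k, Function.update m n t k * x k = (∑ k, m k * x k) + (t - m n) * x n :=
        sum_update_mul m n t x
      have hcx : ∑ k, Function.update m n t k * x k ^ 2
          = (∑ k, m k * x k ^ 2) + (t - m n) * x n ^ 2 :=
        sum_update_mul m n t (fun k => x k ^ 2)
      have hbx2 : ∑ k, (1 - Function.update m n t k) * x k
          = ((∑ k, x k) - ∑ k, m k * x k) - (t - m n) * x n := by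
        simp_rw [sub_mul, one_mul]
        rw [Finset.sum_sub_distrib, hbx]
        ring
      have hcx2 : ∑ k, (1 - Function.update m n t k) * x k ^ 2
          = ((∑ k, x k ^ 2) - ∑ k, m k * x k ^ 2) - (t - m n) * x n ^ 2 := by
        simp_rw [sub_mul, one_mul]
        rw [Finset.sum_sub_distrib, hcx]
        ring
      have ha1t : alph (Function.update m n t) = ((∑ k, m k) + (t - m n)) / (N:ℝ) := by
        unfold alph; rw [hsu]
      have ha2t : (alph fun k => 1 - Function.update m n t k)
          = ((N:ℝ) - (∑ k, m k) - (t - m n)) / (N:ℝ) := by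
        unfold alph; rw [hsu2]
      have hs1t : sig2 x (Function.update m n t)
          = ((∑ k, m k * x k ^ 2) + (t - m n) * x n ^ 2) / ((∑ k, m k) + (t - m n))
            - (((∑ k, m k * x k) + (t - m n) * x n) / ((∑ k, m k) + (t - m n))) ^ 2 := by
        rw [sig2_eq x _ hNe (by rw [hsu]; exact h1.ne'), hsu, hbx, hcx]
      have hs2t : (sig2 x fun k => 1 - Function.update m n t k)
          = (((∑ k, x k ^ 2) - ∑ k, m k * x k ^ 2) - (t - m n) * x n ^ 2)
              / ((N:ℝ) - (∑ k, m k) - (t - m n))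
            - ((((∑ k, x k) - ∑ k, m k * x k) - (t - m n) * x n)
              / ((N:ℝ) - (∑ k, m k) - (t - m n))) ^ 2 := by
        rw [sig2_eq x _ hNe (by rw [hsu2]; exact h2.ne'), hsu2, hbx2, hcx2]
      have hp1 : 0 < sig2 x (Function.update m n t) := by rw [hs1t]; exact h3
      have hp2 : 0 < sig2 x fun k => 1 - Function.update m n t k := by rw [hs2t]; exact h4
      unfold objG
      rw [Real.log_mul (mul_ne_zero (Real.exp_ne_zero _) (Real.rpow_pos_of_pos hp1 _).ne')
          (Real.rpow_pos_of_pos hp2 _).ne',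
        Real.log_mul (Real.exp_ne_zero _) (Real.rpow_pos_of_pos hp1 _).ne',
        Real.log_exp, Real.log_rpow hp1, Real.log_rpow hp2,
        ha1t, ha2t, hs1t, hs2t]
      unfold H2
      simp only [one_mul, neg_one_mul, neg_mul, ← sub_eq_add_neg]
      ring
    have key := hφ.congr_of_eventuallyEq heq
    convert key using 1
    case e'_4 => rfl
    case e'_5 => rfl
    rw [hsig1, hsig2', halph1, halph2, hmu1, hmu2]
    ring
  · rw [logGauss (N:ℝ) _ _ _ _ hα2 hσ2, logGauss (N:ℝ) _ _ _ _ hα1 hσ1]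
    ring


end
end

section
/- (Type-class bound, Lemma 2, stated with the absolute-value cross term needed to make it precise.) Let m̂ be a soft membership assignment with induced parameters α̂_i > 0, σ̂_i² > 0 and Gaussian densities f̂_i = f_{μ̂_i, σ̂_i}, satisfying: m̂_{n,1} = 1 whenever α̂₁ f̂₁(x_n) > α̂₂ f̂₂(x_n) and m̂_{n,1} = 0 whenever α̂₁ f̂₁(x_n) < α̂₂ f̂₂(x_n). Let M > 0 with |x_n| < M for all n, let L be an odd positive integer, W = 2M/L, and for each integer k with |k| ≤ (L−1)/2 let I_k = [(k−1/2)W, (k+1/2)W) and a_k = #{n : x_n ∈ I_k}. Let p̂(x) = α̂₁ f̂₁(x) + α̂₂ f̂₂(x), let c_P = 1/∫_{−M}^{M} p̂(x) dx, and P_N(k) = c_P ∫_{I_k} p̂(x) dx. Then Σ_k (−a_k/N) ln P_N(k) ≤ (α̂₁/2) ln(2π e σ̂₁²) + (α̂₂/2) ln(2π e σ̂₂²) + H(α̂₁, α̂₂) + (α̂₁/(2σ̂₁²) + α̂₂/(2σ̂₂²)) W² + (α̂₁/σ̂₁ + α̂₂/σ̂₂) W − ln W − ln c_P, where H(α₁,α₂)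 = −α₁ ln α₁ − α₂ ln α₂. (When Σ_k P_N(k) = 1, the left-hand side equals D(a/N ‖ P_N) + H(a/N) for the empirical type a/N.) -/
open Real Finset MeasureTheory intervalIntegral

noncomputable section

lemma gaussDen_pos (μ v : ℝ) (hv : 0 < v) (y : ℝ) : 0 < gaussDen μ (Real.sqrt v) y := by
  unfold gaussDen
  have h2π : 0 < Real.sqrt (2 * Real.pi) := Real.sqrt_pos.2 (by positivity)
  positivity

lemma gaussDen_cont (μ v : ℝ) : Continuous (gaussDen μ (Real.sqrt v)) := by
  unfold gaussDen; continuity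

lemma gauss_lb (μ v : ℝ) (hv : 0 < v) (x y W : ℝ) (h : |y - x| ≤ W) :
    gaussDen μ (Real.sqrt v) x *
      Real.exp (-(|x - μ| * W / v + W ^ 2 / (2 * v))) ≤ gaussDen μ (Real.sqrt v) y := by
  unfold gaussDen
  rw [mul_assoc, ← Real.exp_add]
  have hsq : Real.sqrt v ^ 2 = v := Real.sq_sqrt hv.le
  rw [hsq]
  have h2π : 0 < Real.sqrt (2 * Real.pi) := Real.sqrt_pos.2 (by positivity)
  have hc : 0 < 1 / (Real.sqrt (2 * Real.pi) * Real.sqrt v) := by positivity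
  apply mul_le_mul_of_nonneg_left _ hc.le
  apply Real.exp_le_exp.2
  have h1 : (x - μ) * (y - x) ≤ |x - μ| * W :=
    le_trans (le_abs_self _) (by rw [abs_mul]; exact mul_le_mul_of_nonneg_left h (abs_nonneg _))
  have h2 : (y - x) ^ 2 ≤ W ^ 2 := by
    have := abs_nonneg (y - x)
    nlinarith [sq_abs (y - x)]
  have hW : 0 ≤ W := le_trans (abs_nonneg _) h
  have key : (y - μ) ^ 2 ≤ (x - μ) ^ 2 + 2 * (|x - μ| * W) + W ^ 2 := by nlinarith
  rw [← sub_nonneg]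
  have heq : -(y - μ) ^ 2 / (2 * v) -
      (-(x - μ) ^ 2 / (2 * v) + -(|x - μ| * W / v + W ^ 2 / (2 * v))) =
      ((x - μ) ^ 2 + 2 * (|x - μ| * W) + W ^ 2 - (y - μ) ^ 2) / (2 * v) := by
    field_simp; ring
  rw [heq]
  exact div_nonneg (by linarith) (by linarith)

lemma abs_moment' {N : ℕ} (w x : Fin N → ℝ) (hw : ∀ n, 0 ≤ w n) (μ A V : ℝ)
    (hA : ∑ n, w n = A) (hV : ∑ n, w n * (x n - μ) ^ 2 = V) :
    ∑ n, w n * |x n - μ| ≤ Real.sqrt (A * V) := by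
  have hcs := Finset.sum_mul_sq_le_sq_mul_sq Finset.univ
    (fun n => Real.sqrt (w n)) (fun n => Real.sqrt (w n) * |x n - μ|)
  have he : ∀ n : Fin N, Real.sqrt (w n) * (Real.sqrt (w n) * |x n - μ|) = w n * |x n - μ| := by
    intro n
    rw [← mul_assoc, Real.mul_self_sqrt (hw n)]
  have he2 : ∀ n : Fin N, (Real.sqrt (w n) * |x n - μ|) ^ 2 = w n * (x n - μ) ^ 2 := by
    intro n
    rw [mul_pow, Real.sq_sqrt (hw n), sq_abs]
  simp only [he, he2, Real.sq_sqrt (hw _)] at hcs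
  rw [hA, hV] at hcs
  have hnn : 0 ≤ ∑ n, w n * |x n - μ| :=
    Finset.sum_nonneg fun n _ => mul_nonneg (hw n) (abs_nonneg _)
  calc ∑ n, w n * |x n - μ| = Real.sqrt ((∑ n, w n * |x n - μ|) ^ 2) := (Real.sqrt_sq hnn).symm
    _ ≤ Real.sqrt (A * V) := Real.sqrt_le_sqrt hcs

lemma bin_iff (W t : ℝ) (hW : 0 < W) (k : ℤ) :
    (((k : ℝ) - 1 / 2) * W ≤ t ∧ t < ((k : ℝ) + 1 / 2) * W) ↔ k = ⌊t / W + 1 / 2⌋ := by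
  have e1 : ∀ c : ℝ, c * W ≤ t ↔ c ≤ t / W := fun c => (le_div_iff₀ hW).symm
  have e2 : ∀ c : ℝ, t < c * W ↔ t / W < c := fun c => (div_lt_iff₀ hW).symm
  rw [e1, e2, eq_comm, Int.floor_eq_iff]
  constructor <;> rintro ⟨h1, h2⟩ <;> constructor <;> push_cast at * <;> linarith

lemma bin_mem (W t M : ℝ) (hW : 0 < W) (L : ℕ) (j : ℕ) (hj : L = 2 * j + 1)
    (hM : M = L * W / 2) (ht : |t| < M) :
    ⌊t / W + 1 / 2⌋ ∈ Finset.Icc (-(((L : ℤ) - 1) / 2)) (((L : ℤ) - 1) / 2) := by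
  have hdiv : (((L : ℤ) - 1) / 2) = (j : ℤ) := by omega
  rw [hdiv, Finset.mem_Icc]
  rw [abs_lt] at ht
  have hLr : (L : ℝ) = 2 * j + 1 := by exact_mod_cast congrArg (Nat.cast : ℕ → ℝ) hj
  have h1 : t / W + 1 / 2 < (j : ℝ) + 1 := by
    rw [div_add' _ _ _ hW.ne', div_lt_iff₀ hW]
    nlinarith [ht.2]
  have h2 : -(j : ℝ) ≤ t / W + 1 / 2 := by
    rw [div_add' _ _ _ hW.ne', le_div_iff₀ hW]
    nlinarith [ht.1]
  constructor
  · exact_mod_cast Int.le_floor.2 (by exact_mod_cast h2)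
  · have h3 : ⌊t / W + 1 / 2⌋ < (j : ℤ) + 1 := by
      rw [Int.floor_lt]; push_cast; exact h1
    omega

lemma integral_ge_const (p : ℝ → ℝ) (hp : Continuous p) (lo hi c : ℝ) (hle : lo ≤ hi)
    (h : ∀ y ∈ Set.Icc lo hi, c ≤ p y) : (hi - lo) * c ≤ ∫ y in lo..hi, p y := by
  have := intervalIntegral.integral_mono_on hle
    (_root_.intervalIntegrable_const (μ := MeasureTheory.volume) (c := c))
    (hp.intervalIntegrable lo hi) h
  simpa [intervalIntegral.integral_const, smul_eq_mul] using this

lemma integral_pos' (p : ℝ → ℝ) (hp : Continuous p) (lo hi : ℝ) (hlt : lo < hi)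
    (h : ∀ y, 0 < p y) : 0 < ∫ y in lo..hi, p y :=
  intervalIntegral.intervalIntegral_pos_of_pos_on
    (hp.intervalIntegrable lo hi) (fun y _ => h y) hlt

lemma log_gaussDen (μ v t : ℝ) (hv : 0 < v) :
    Real.log (gaussDen μ (Real.sqrt v) t) =
      -Real.log (Real.sqrt (2 * Real.pi) * Real.sqrt v) - (t - μ) ^ 2 / (2 * v) := by
  have h2π : 0 < Real.sqrt (2 * Real.pi) := Real.sqrt_pos.2 (by positivity)
  have hs : 0 < Real.sqrt v := Real.sqrt_pos.2 hv
  unfold gaussDen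
  rw [Real.log_mul (by positivity) (Real.exp_ne_zero _), Real.log_exp, one_div,
    Real.log_inv, Real.sq_sqrt hv.le]
  ring

lemma log_PN_bound (p : ℝ → ℝ) (hp : Continuous p) (α : ℝ) (hα : 0 < α)
    (μ v : ℝ) (hv : 0 < v) (t lo hi W cP : ℝ) (hcP : 0 < cP)
    (hlo : lo ≤ t) (hhi : t < hi) (hdiff : hi - lo = W)
    (hcmp : ∀ y, α * gaussDen μ (Real.sqrt v) y ≤ p y) :
    -Real.log (cP * ∫ y in lo..hi, p y) ≤ -Real.log cP - Real.log W
      + (-Real.log α + Real.log (Real.sqrt (2 * Real.pi) * Real.sqrt v)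
        + (t - μ) ^ 2 / (2 * v) + |t - μ| * W / v + W ^ 2 / (2 * v)) := by
  have hW : 0 < W := by linarith
  set E := |t - μ| * W / v + W ^ 2 / (2 * v) with hE
  set c := α * (gaussDen μ (Real.sqrt v) t * Real.exp (-E)) with hc
  have hgpos := gaussDen_pos μ v hv t
  have hcpos : 0 < c := by rw [hc]; positivity
  have hIlb : W * c ≤ ∫ y in lo..hi, p y := by
    have := integral_ge_const p hp lo hi c (by linarith) (fun y hy => by
      have habs : |y - t| ≤ W := abs_le.2 ⟨by cases hy with | intro h1 h2 => linarith,
        by cases hy with | intro h1 h2 => linarith⟩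
      calc c = α * (gaussDen μ (Real.sqrt v) t * Real.exp (-E)) := hc
        _ ≤ α * gaussDen μ (Real.sqrt v) y :=
          mul_le_mul_of_nonneg_left (gauss_lb μ v hv t y W habs) hα.le
        _ ≤ p y := hcmp y)
    rwa [hdiff] at this
  have hI : 0 < ∫ y in lo..hi, p y := lt_of_lt_of_le (by positivity) hIlb
  have hlog : Real.log (cP * (W * c)) ≤ Real.log (cP * ∫ y in lo..hi, p y) :=
    Real.log_le_log (by positivity) (mul_le_mul_of_nonneg_left hIlb hcP.le)
  have hexp : Real.log (cP * (W * c)) = Real.log cP + Real.log W + Real.log α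
      + Real.log (gaussDen μ (Real.sqrt v) t) + (-E) := by
    rw [hc, Real.log_mul hcP.ne' (by positivity), Real.log_mul hW.ne' (by positivity),
      Real.log_mul hα.ne' (by positivity), Real.log_mul hgpos.ne' (Real.exp_ne_zero _),
      Real.log_exp]
    ring
  have hlg := log_gaussDen μ v t hv
  rw [hexp, hlg] at hlog
  rw [hE] at hlog
  linarith

lemma class_sum_alg (α v W Nr : ℝ) (hα : 0 < α) (hv : 0 < v) :
    (-Real.log α + Real.log (Real.sqrt (2 * Real.pi) * Real.sqrt v) + W ^ 2 / (2 * v)) * (α * Nr)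
      + v * (α * Nr) / (2 * v) + W / v * (α * Nr * Real.sqrt v)
    = (α / 2 * Real.log (2 * Real.pi * Real.exp 1 * v) - α * Real.log α
        + α / (2 * v) * W ^ 2 + α / Real.sqrt v * W) * Nr := by
  have hs : 0 < Real.sqrt v := Real.sqrt_pos.2 hv
  have hss : Real.sqrt v * Real.sqrt v = v := Real.mul_self_sqrt hv.le
  have hl1 : Real.log (Real.sqrt (2 * Real.pi) * Real.sqrt v)
      = (Real.log (2 * Real.pi) + Real.log v) / 2 := by
    rw [← Real.sqrt_mul (by positivity) v, Real.log_sqrt (by positivity),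
      Real.log_mul (by positivity) hv.ne']
  have hl2 : Real.log (2 * Real.pi * Real.exp 1 * v)
      = Real.log (2 * Real.pi) + 1 + Real.log v := by
    rw [Real.log_mul (by positivity) hv.ne', Real.log_mul (by positivity)
      (Real.exp_ne_zero 1), Real.log_exp]
  rw [hl1, hl2, ← hss]
  field_simp
  have h2 : Real.sqrt (Real.sqrt v ^ 2) ^ 2 = Real.sqrt v ^ 2 := Real.sq_sqrt (sq_nonneg _)
  linear_combination (2 * Nr * W) * h2



set_option maxHeartbeats 1000000 in
/-- **Lemma 2 (type-class bound).** For a MAP-consistent soft assignment `m̂`, binning the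
data into `L` bins of width `W = 2M/L` with empirical counts `a_k` and binned model
probabilities `P_N(k) = c_P ∫_{I_k} p̂`, one has
`∑_k (-a_k/N) ln P_N(k) ≤ (α̂₁/2) ln(2πe σ̂₁²) + (α̂₂/2) ln(2πe σ̂₂²) + H(α̂₁,α̂₂)
  + (α̂₁/(2σ̂₁²) + α̂₂/(2σ̂₂²)) W² + (α̂₁/σ̂₁ + α̂₂/σ̂₂) W - ln W - ln c_P`. -/
theorem type_class_bound
    (N : ℕ) (hN : 1 ≤ N) (x : Fin N → ℝ) (mhat : Fin N → ℝ)
    (hmemb : isMemb mhat)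
    (hα1 : 0 < alph mhat) (hα2 : 0 < alph fun n => 1 - mhat n)
    (hσ1 : 0 < sig2 x mhat) (hσ2 : 0 < sig2 x fun n => 1 - mhat n)
    -- abbreviations for the induced parameters and densities
    (α₁ α₂ μ₁ μ₂ v₁ v₂ : ℝ) (f₁ f₂ : ℝ → ℝ)
    (hα₁ : α₁ = alph mhat) (hα₂ : α₂ = alph fun n => 1 - mhat n)
    (hμ₁ : μ₁ = muI x mhat) (hμ₂ : μ₂ = muI x fun n => 1 - mhat n)
    (hv₁ : v₁ = sig2 x mhat) (hv₂ : v₂ = sig2 x fun n => 1 - mhat n)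
    (hf₁ : f₁ = gaussDen μ₁ (Real.sqrt v₁)) (hf₂ : f₂ = gaussDen μ₂ (Real.sqrt v₂))
    -- the MAP condition from Theorem 1
    (hMAP1 : ∀ n, α₂ * f₂ (x n) < α₁ * f₁ (x n) → mhat n = 1)
    (hMAP0 : ∀ n, α₁ * f₁ (x n) < α₂ * f₂ (x n) → mhat n = 0)
    -- binning setup
    (M : ℝ) (hM : 0 < M) (hbound : ∀ n, |x n| < M)
    (L : ℕ) (hL : 0 < L) (hLodd : Odd L)
    (W : ℝ) (hW : W = 2 * M / L)
    -- empirical bin counts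
    (a : ℤ → ℝ)
    (ha : ∀ k : ℤ, a k =
      ∑ n : Fin N, if ((k : ℝ) - 1 / 2) * W ≤ x n ∧ x n < ((k : ℝ) + 1 / 2) * W
        then (1 : ℝ) else 0)
    -- normalization constant and binned model probabilities
    (cP : ℝ) (hcP : cP = 1 / ∫ y in (-M)..M, (α₁ * f₁ y + α₂ * f₂ y))
    (PN : ℤ → ℝ)
    (hPN : ∀ k : ℤ, PN k =
      cP * ∫ y in (((k : ℝ) - 1 / 2) * W)..(((k : ℝ) + 1 / 2) * W), (α₁ * f₁ y + α₂ * f₂ y)) :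
    ∑ k ∈ Finset.Icc (-(((L : ℤ) - 1) / 2)) (((L : ℤ) - 1) / 2),
        (-(a k) / N) * Real.log (PN k) ≤
      α₁ / 2 * Real.log (2 * Real.pi * Real.exp 1 * v₁)
        + α₂ / 2 * Real.log (2 * Real.pi * Real.exp 1 * v₂)
        + H2 α₁ α₂
        + (α₁ / (2 * v₁) + α₂ / (2 * v₂)) * W ^ 2
        + (α₁ / Real.sqrt v₁ + α₂ / Real.sqrt v₂) * W
        - Real.log W - Real.log cP := by
  have hNpos : (0 : ℝ) < N := by exact_mod_cast hN
  obtain ⟨j, hj⟩ := hLodd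
  have hLpos : (0 : ℝ) < L := by exact_mod_cast hL
  have hWpos : 0 < W := by rw [hW]; positivity
  have hMW : M = L * W / 2 := by rw [hW]; field_simp
  have hv1p : 0 < v₁ := hv₁ ▸ hσ1
  have hv2p : 0 < v₂ := hv₂ ▸ hσ2
  have ha1p : 0 < α₁ := hα₁ ▸ hα1
  have ha2p : 0 < α₂ := hα₂ ▸ hα2
  have hs1p : 0 < Real.sqrt v₁ := Real.sqrt_pos.2 hv1p
  have hs2p : 0 < Real.sqrt v₂ := Real.sqrt_pos.2 hv2p
  have hf1pos : ∀ y, 0 < f₁ y := fun y => hf₁ ▸ gaussDen_pos μ₁ v₁ hv1p y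
  have hf2pos : ∀ y, 0 < f₂ y := fun y => hf₂ ▸ gaussDen_pos μ₂ v₂ hv2p y
  have hpcont : Continuous fun y => α₁ * f₁ y + α₂ * f₂ y := by
    rw [hf₁, hf₂]
    exact (continuous_const.mul (gaussDen_cont μ₁ v₁)).add
      (continuous_const.mul (gaussDen_cont μ₂ v₂))
  have hppos : ∀ y, 0 < α₁ * f₁ y + α₂ * f₂ y := fun y => by
    have := hf1pos y; have := hf2pos y; positivity
  have hcPpos : 0 < cP := by
    rw [hcP]
    have := integral_pos' _ hpcont (-M) M (by linarith) hppos
    positivity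
  set k₀ : Fin N → ℤ := fun n => ⌊x n / W + 1 / 2⌋ with hk0
  -- Step B : rewrite the LHS as a sum over data points
  have hLHS : ∑ k ∈ Finset.Icc (-(((L : ℤ) - 1) / 2)) (((L : ℤ) - 1) / 2),
      (-(a k) / N) * Real.log (PN k) = ∑ n, -Real.log (PN (k₀ n)) / N := by
    have step1 : ∀ k : ℤ, (-(a k) / (N : ℝ)) * Real.log (PN k)
        = ∑ n, (if ((k : ℝ) - 1 / 2) * W ≤ x n ∧ x n < ((k : ℝ) + 1 / 2) * W
            then -Real.log (PN k) / N else 0) := by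
      intro k
      rw [ha k]
      calc (-(∑ n, if ((k : ℝ) - 1 / 2) * W ≤ x n ∧ x n < ((k : ℝ) + 1 / 2) * W
              then (1 : ℝ) else 0) / N) * Real.log (PN k)
          = ∑ n, (if ((k : ℝ) - 1 / 2) * W ≤ x n ∧ x n < ((k : ℝ) + 1 / 2) * W
              then (1 : ℝ) else 0) * (-Real.log (PN k) / N) := by
            rw [← Finset.sum_mul]; ring
        _ = _ := by
            refine Finset.sum_congr rfl fun n _ => ?_
            split <;> simp
    rw [Finset.sum_congr rfl fun k _ => step1 k, Finset.sum_comm]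
    refine Finset.sum_congr rfl fun n _ => ?_
    have hcong : ∀ k ∈ Finset.Icc (-(((L : ℤ) - 1) / 2)) (((L : ℤ) - 1) / 2),
        (if ((k : ℝ) - 1 / 2) * W ≤ x n ∧ x n < ((k : ℝ) + 1 / 2) * W
          then -Real.log (PN k) / N else 0)
        = (if k = k₀ n then -Real.log (PN k) / N else 0) := fun k _ => by
      rw [if_congr (bin_iff W (x n) hWpos k) rfl rfl]
    rw [Finset.sum_congr rfl hcong, Finset.sum_ite_eq' _ (k₀ n)
      (fun k => -Real.log (PN k) / N),
      if_pos (bin_mem W (x n) M hWpos L j hj hMW (hbound n))]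
  -- Step C : per-point bound
  have hkmem : ∀ n, ((k₀ n : ℝ) - 1 / 2) * W ≤ x n ∧ x n < ((k₀ n : ℝ) + 1 / 2) * W :=
    fun n => (bin_iff W (x n) hWpos (k₀ n)).2 rfl
  have hcmp1 : ∀ y, α₁ * gaussDen μ₁ (Real.sqrt v₁) y ≤ α₁ * f₁ y + α₂ * f₂ y := fun y => by
    have := hf2pos y; rw [hf₁]; nlinarith
  have hcmp2 : ∀ y, α₂ * gaussDen μ₂ (Real.sqrt v₂) y ≤ α₁ * f₁ y + α₂ * f₂ y := fun y => by
    have := hf1pos y; rw [hf₂]; nlinarith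
  set G₁ : Fin N → ℝ := fun n => -Real.log α₁
      + Real.log (Real.sqrt (2 * Real.pi) * Real.sqrt v₁)
      + (x n - μ₁) ^ 2 / (2 * v₁) + |x n - μ₁| * W / v₁ + W ^ 2 / (2 * v₁) with hG1
  set G₂ : Fin N → ℝ := fun n => -Real.log α₂
      + Real.log (Real.sqrt (2 * Real.pi) * Real.sqrt v₂)
      + (x n - μ₂) ^ 2 / (2 * v₂) + |x n - μ₂| * W / v₂ + W ^ 2 / (2 * v₂) with hG2
  have hbound1 : ∀ n, -Real.log (PN (k₀ n)) ≤ -Real.log cP - Real.log W + G₁ n := fun n => by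
    rw [hPN (k₀ n)]; simp only [hG1]
    have := log_PN_bound _ hpcont α₁ ha1p μ₁ v₁ hv1p (x n) _ _ W cP hcPpos
      (hkmem n).1 (hkmem n).2 (by ring) hcmp1
    linarith
  have hbound2 : ∀ n, -Real.log (PN (k₀ n)) ≤ -Real.log cP - Real.log W + G₂ n := fun n => by
    rw [hPN (k₀ n)]; simp only [hG2]
    have := log_PN_bound _ hpcont α₂ ha2p μ₂ v₂ hv2p (x n) _ _ W cP hcPpos
      (hkmem n).1 (hkmem n).2 (by ring) hcmp2
    linarith
  have hcomb : ∀ n, -Real.log (PN (k₀ n)) ≤ -Real.log cP - Real.log W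
      + (mhat n * G₁ n + (1 - mhat n) * G₂ n) := fun n => by
    obtain ⟨hm0, hm1⟩ := hmemb n
    have e1 := mul_le_mul_of_nonneg_left (hbound1 n) hm0
    have e2 := mul_le_mul_of_nonneg_left (hbound2 n) (by linarith : (0:ℝ) ≤ 1 - mhat n)
    nlinarith [e1, e2]
  -- Step D : summation
  have hne : alph mhat * (N : ℝ) ≠ 0 := by positivity
  have hne2 : alph (fun n => 1 - mhat n) * (N : ℝ) ≠ 0 := by positivity
  have hsum1 : ∑ n, mhat n = α₁ * N := by
    rw [hα₁]; unfold alph; field_simp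
  have hsum2 : ∑ n, (1 - mhat n) = α₂ * N := by
    rw [hα₂]; unfold alph; field_simp
  have hvar1 : ∑ n, mhat n * (x n - μ₁) ^ 2 = v₁ * (α₁ * N) := by
    rw [hv₁, hμ₁, hα₁]; unfold sig2; rw [div_mul_cancel₀ _ hne]
  have hvar2 : ∑ n, (1 - mhat n) * (x n - μ₂) ^ 2 = v₂ * (α₂ * N) := by
    rw [hv₂, hμ₂, hα₂]; unfold sig2; rw [div_mul_cancel₀ _ hne2]
  have habs1 : ∑ n, mhat n * |x n - μ₁| ≤ α₁ * N * Real.sqrt v₁ := by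
    have h := abs_moment' mhat x (fun n => (hmemb n).1) μ₁ (α₁ * N) (v₁ * (α₁ * N)) hsum1 hvar1
    calc ∑ n, mhat n * |x n - μ₁| ≤ Real.sqrt (α₁ * N * (v₁ * (α₁ * N))) := h
      _ = α₁ * N * Real.sqrt v₁ := by
        rw [show α₁ * (N:ℝ) * (v₁ * (α₁ * N)) = (α₁ * N) ^ 2 * v₁ by ring,
          Real.sqrt_mul (sq_nonneg _), Real.sqrt_sq (by positivity)]
  have habs2 : ∑ n, (1 - mhat n) * |x n - μ₂| ≤ α₂ * N * Real.sqrt v₂ := by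
    have h := abs_moment' (fun n => 1 - mhat n) x (fun n => by show (0:ℝ) ≤ 1 - mhat n; linarith [(hmemb n).2])
      μ₂ (α₂ * N) (v₂ * (α₂ * N)) hsum2 hvar2
    calc ∑ n, (1 - mhat n) * |x n - μ₂| ≤ Real.sqrt (α₂ * N * (v₂ * (α₂ * N))) := h
      _ = α₂ * N * Real.sqrt v₂ := by
        rw [show α₂ * (N:ℝ) * (v₂ * (α₂ * N)) = (α₂ * N) ^ 2 * v₂ by ring,
          Real.sqrt_mul (sq_nonneg _), Real.sqrt_sq (by positivity)]
  have hexp1 : ∑ n, mhat n * G₁ n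
      ≤ (α₁ / 2 * Real.log (2 * Real.pi * Real.exp 1 * v₁) - α₁ * Real.log α₁
        + α₁ / (2 * v₁) * W ^ 2 + α₁ / Real.sqrt v₁ * W) * N := by
    have e : ∑ n, mhat n * G₁ n
        = (-Real.log α₁ + Real.log (Real.sqrt (2 * Real.pi) * Real.sqrt v₁)
            + W ^ 2 / (2 * v₁)) * (∑ n, mhat n)
          + (∑ n, mhat n * (x n - μ₁) ^ 2) / (2 * v₁)
          + W / v₁ * (∑ n, mhat n * |x n - μ₁|) := by
      rw [Finset.mul_sum, Finset.sum_div, Finset.mul_sum,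
        ← Finset.sum_add_distrib, ← Finset.sum_add_distrib]
      exact Finset.sum_congr rfl fun n _ => by simp only [hG1]; ring
    rw [e, hsum1, hvar1]
    have halg := class_sum_alg α₁ v₁ W N ha1p hv1p
    have hstep : W / v₁ * (∑ n, mhat n * |x n - μ₁|) ≤ W / v₁ * (α₁ * N * Real.sqrt v₁) :=
      mul_le_mul_of_nonneg_left habs1 (by positivity)
    linarith
  have hexp2 : ∑ n, (1 - mhat n) * G₂ n
      ≤ (α₂ / 2 * Real.log (2 * Real.pi * Real.exp 1 * v₂) - α₂ * Real.log α₂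
        + α₂ / (2 * v₂) * W ^ 2 + α₂ / Real.sqrt v₂ * W) * N := by
    have e : ∑ n, (1 - mhat n) * G₂ n
        = (-Real.log α₂ + Real.log (Real.sqrt (2 * Real.pi) * Real.sqrt v₂)
            + W ^ 2 / (2 * v₂)) * (∑ n, (1 - mhat n))
          + (∑ n, (1 - mhat n) * (x n - μ₂) ^ 2) / (2 * v₂)
          + W / v₂ * (∑ n, (1 - mhat n) * |x n - μ₂|) := by
      rw [Finset.mul_sum, Finset.sum_div, Finset.mul_sum,
        ← Finset.sum_add_distrib, ← Finset.sum_add_distrib]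
      exact Finset.sum_congr rfl fun n _ => by simp only [hG2]; ring
    rw [e, hsum2, hvar2]
    have halg := class_sum_alg α₂ v₂ W N ha2p hv2p
    have hstep : W / v₂ * (∑ n, (1 - mhat n) * |x n - μ₂|) ≤ W / v₂ * (α₂ * N * Real.sqrt v₂) :=
      mul_le_mul_of_nonneg_left habs2 (by positivity)
    linarith
  -- put everything together
  rw [hLHS]
  have hle : ∑ n, -Real.log (PN (k₀ n)) / N
      ≤ ∑ n, (-Real.log cP - Real.log W + (mhat n * G₁ n + (1 - mhat n) * G₂ n)) / N :=
    Finset.sum_le_sum fun n _ => by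
      have := hcomb n; gcongr ?_ / _
  refine le_trans hle ?_
  have hsplit : ∑ n, (-Real.log cP - Real.log W + (mhat n * G₁ n + (1 - mhat n) * G₂ n)) / N
      = -Real.log cP - Real.log W
        + ((∑ n, mhat n * G₁ n) + ∑ n, (1 - mhat n) * G₂ n) / N := by
    rw [← Finset.sum_div, Finset.sum_add_distrib, Finset.sum_add_distrib,
      Finset.sum_const, Finset.card_univ, Fintype.card_fin, nsmul_eq_mul]
    field_simp
  rw [hsplit]
  have hS : ((∑ n, mhat n * G₁ n) + ∑ n, (1 - mhat n) * G₂ n) / N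
      ≤ (α₁ / 2 * Real.log (2 * Real.pi * Real.exp 1 * v₁) - α₁ * Real.log α₁
          + α₁ / (2 * v₁) * W ^ 2 + α₁ / Real.sqrt v₁ * W)
        + (α₂ / 2 * Real.log (2 * Real.pi * Real.exp 1 * v₂) - α₂ * Real.log α₂
          + α₂ / (2 * v₂) * W ^ 2 + α₂ / Real.sqrt v₂ * W) := by
    rw [div_le_iff₀ hNpos]
    nlinarith [hexp1, hexp2]
  have hH2 : H2 α₁ α₂ = -α₁ * Real.log α₁ - α₂ * Real.log α₂ := rfl
  nlinarith [hS]

end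
end
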